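/- Let r be a positive even integer, r' = r/2 + 1, and let P = {p_1,…,p_{r'}}, Q = {q_1,…,q_{r'}} ⊆ [n] with p_1 < q_1 < p_2 < q_2 < ⋯ < p_{r'} < q_{r'}, and X ⊆ [n]∖(P∪Q). Let a ∈ [n]∖(X∪P∪Q) with a > p_1, and set Y := X∪Q∪{a}. Then Y and X∪S are weakly r-separated for every S ∈ N↑(P,Q), while Y and X∪P are not weakly r-separated. -/
import Mathlib


open Finset

/-- An alternating sequence for the pair of sets `A`, `B`: a strictly increasing
sequence whose odd-position elements lie in one of `A \ B`, `B \ A` and whose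
even-position elements lie in the other. -/
def IsAltSeq (A B : Finset ℕ) {m : ℕ} (f : Fin m → ℕ) : Prop :=
  StrictMono f ∧
    ((∀ j : Fin m, (j : ℕ) % 2 = 0 → f j ∈ A \ B) ∧
        (∀ j : Fin m, (j : ℕ) % 2 = 1 → f j ∈ B \ A) ∨
      (∀ j : Fin m, (j : ℕ) % 2 = 0 → f j ∈ B \ A) ∧
        (∀ j : Fin m, (j : ℕ) % 2 = 1 → f j ∈ A \ B))

/-- `altLen A B` is the maximum length of an alternating sequence for `A`, `B`. -/
noncomputable def altLen (A B : Finset ℕ) : ℕ :=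
  sSup {m : ℕ | ∃ f : Fin m → ℕ, IsAltSeq A B f}

/-- `A` surrounds `B`:  `min (A \ B) < min (B \ A)` and `max (B \ A) < max (A \ B)`. -/
def Surrounds (A B : Finset ℕ) : Prop :=
  (A \ B).min < (B \ A).min ∧ (B \ A).max < (A \ B).max

/-- Weak `r`-separation for an odd `r`. -/
def WeaklySep (r : ℕ) (A B : Finset ℕ) : Prop :=
  altLen A B ≤ r + 2 ∧
    (altLen A B = r + 2 →
      Surrounds A B ∧ A.card ≤ B.card ∨ Surrounds B A ∧ B.card ≤ A.card)

/-- `A` surrounds `B` from the right: `max (B \ A) < max (A \ B)`. -/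
def SurroundsRight (A B : Finset ℕ) : Prop :=
  (B \ A).max < (A \ B).max

/-- Weak `r`-separation for an even `r`. -/
def WeaklySepE (r : ℕ) (A B : Finset ℕ) : Prop :=
  altLen A B ≤ r + 2 ∧
    (altLen A B = r + 2 →
      SurroundsRight A B ∧ A.card ≤ B.card ∨ SurroundsRight B A ∧ B.card ≤ A.card)

lemma isAltSeq_length_le {A B : Finset ℕ} {m : ℕ} {f : Fin m → ℕ} (h : IsAltSeq A B f) :
    m ≤ (A \ B).card + (B \ A).card := by
  obtain ⟨hm, hc⟩ := h
  have hmem : ∀ j : Fin m, f j ∈ (A \ B) ∪ (B \ A) := by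
    intro j
    rw [mem_union]
    rcases Nat.mod_two_eq_zero_or_one (j : ℕ) with h2 | h2 <;>
      rcases hc with ⟨h0, h1⟩ | ⟨h0, h1⟩
    · exact Or.inl (h0 j h2)
    · exact Or.inr (h0 j h2)
    · exact Or.inr (h1 j h2)
    · exact Or.inl (h1 j h2)
  calc m = (Finset.univ : Finset (Fin m)).card := by simp
    _ ≤ ((A \ B) ∪ (B \ A)).card := by
        apply Finset.card_le_card_of_injOn f (fun j _ => hmem j)
        exact fun x _ y _ h => hm.injective h
    _ ≤ (A \ B).card + (B \ A).card := Finset.card_union_le _ _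

lemma zero_mem_altSet (A B : Finset ℕ) : 0 ∈ {m : ℕ | ∃ f : Fin m → ℕ, IsAltSeq A B f} :=
  ⟨Fin.elim0, ⟨fun x => x.elim0, Or.inl ⟨fun j => j.elim0, fun j => j.elim0⟩⟩⟩

lemma altLen_le_card (A B : Finset ℕ) : altLen A B ≤ (A \ B).card + (B \ A).card := by
  apply csSup_le ⟨0, zero_mem_altSet A B⟩
  rintro m ⟨f, hf⟩
  exact isAltSeq_length_le hf

lemma le_altLen {A B : Finset ℕ} {m : ℕ} {f : Fin m → ℕ} (h : IsAltSeq A B f) :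
    m ≤ altLen A B := by
  have hb : BddAbove {m : ℕ | ∃ f : Fin m → ℕ, IsAltSeq A B f} := by
    rw [bddAbove_def]
    refine ⟨(A \ B).card + (B \ A).card, ?_⟩
    rintro k ⟨g, hg⟩
    exact isAltSeq_length_le hg
  exact le_csSup hb ⟨f, h⟩

/-- for even r, the set Y = X ∪ Q ∪ {a} (with
a ∈ [n] ∖ (X ∪ P ∪ Q), a > p₁) is weakly r-separated from X ∪ S for every
upper neighbor S ∈ N↑(P,Q), but not from X ∪ P. -/
theorem even_witness_Y (r n : ℕ) (hr : Even r) (hrpos : 0 < r)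
    (p q : Fin (r / 2 + 1) → ℕ)
    (hp : ∀ i, p i ∈ Finset.Icc 1 n) (hq : ∀ i, q i ∈ Finset.Icc 1 n)
    (hpq : ∀ i, p i < q i)
    (hqp : ∀ i j : Fin (r / 2 + 1), i < j → q i < p j)
    (P Q : Finset ℕ)
    (hP : P = Finset.image p Finset.univ) (hQ : Q = Finset.image q Finset.univ)
    (X : Finset ℕ) (hX : X ⊆ Finset.Icc 1 n \ (P ∪ Q))
    (a : ℕ) (ha : a ∈ Finset.Icc 1 n) (haX : a ∉ X ∪ P ∪ Q) (hap : p 0 < a)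
    (Y : Finset ℕ) (hY : Y = insert a (X ∪ Q)) :
    (∀ S : Finset ℕ,
      ((∃ b ∈ Q, S = insert b P) ∨ ∃ a' ∈ P, ∃ b ∈ Q, S = insert b (P.erase a')) →
      WeaklySepE r Y (X ∪ S)) ∧
    ¬ WeaklySepE r Y (X ∪ P) := by
  obtain ⟨k, hk⟩ := hr
  have hk2 : r / 2 = k := by omega
  -- basic monotonicity facts
  have pm : StrictMono p := by
    intro i j hij
    exact lt_trans (hpq i) (hqp i j hij)
  have qm : StrictMono q := by
    intro i j hij
    exact lt_trans (hqp i j hij) (hpq j)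
  have hpq' : ∀ i j : Fin (r / 2 + 1), i ≤ j → p i < q j :=
    fun i j hij => lt_of_lt_of_le (hpq i) (qm.monotone hij)
  have pqne : ∀ i j : Fin (r / 2 + 1), p i ≠ q j := by
    intro i j
    rcases le_or_gt i j with h | h
    · exact ne_of_lt (hpq' i j h)
    · exact (ne_of_lt (hqp j i h)).symm
  -- membership facts
  have hXPQ : ∀ x ∈ X, x ∉ P ∪ Q := by
    intro x hx
    have := hX hx
    rw [mem_sdiff] at this
    exact this.2
  have hXP : ∀ x ∈ X, x ∉ P := fun x hx h => hXPQ x hx (mem_union_left _ h)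
  have hXQ : ∀ x ∈ X, x ∉ Q := fun x hx h => hXPQ x hx (mem_union_right _ h)
  have hPQ : ∀ x ∈ P, x ∉ Q := by
    intro x hxP hxQ
    rw [hP] at hxP; rw [hQ] at hxQ
    simp only [mem_image, mem_univ, true_and] at hxP hxQ
    obtain ⟨i, hi⟩ := hxP; obtain ⟨j, hj⟩ := hxQ
    exact pqne i j (hi.trans hj.symm)
  have haXX : a ∉ X := fun h => haX (by simp [mem_union, h])
  have haP : a ∉ P := fun h => haX (by simp [mem_union, h])
  have haQ : a ∉ Q := fun h => haX (by simp [mem_union, h])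
  -- cards
  have hPcard : P.card = r / 2 + 1 := by
    rw [hP, Finset.card_image_of_injective _ pm.injective, card_univ, Fintype.card_fin]
  have hQcard : Q.card = r / 2 + 1 := by
    rw [hQ, Finset.card_image_of_injective _ qm.injective, card_univ, Fintype.card_fin]
  have hYcard : Y.card = X.card + (r / 2 + 1) + 1 := by
    rw [hY, card_insert_of_notMem (by simp [mem_union, haXX, haQ]),
      card_union_of_disjoint (disjoint_left.2 hXQ), hQcard]
  -- general sdiff identities
  have hD2gen : ∀ S : Finset ℕ, S ⊆ P ∪ Q → (X ∪ S) \ Y = S \ Q := by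
    intro S hS
    ext x
    simp only [hY, mem_sdiff, mem_union, mem_insert]
    constructor
    · rintro ⟨hx1 | hx1, hx2⟩
      · exact absurd (Or.inr (Or.inl hx1)) hx2
      · exact ⟨hx1, fun h => hx2 (Or.inr (Or.inr h))⟩
    · rintro ⟨hx1, hx2⟩
      refine ⟨Or.inr hx1, ?_⟩
      rintro (rfl | hx | hx)
      · rcases mem_union.1 (hS hx1) with h | h
        · exact haP h
        · exact haQ h
      · rcases mem_union.1 (hS hx1) with h | h
        · exact hXP x hx h
        · exact hXQ x hx h
      · exact hx2 hx
  have hD1gen : ∀ S : Finset ℕ, S ⊆ P ∪ Q → Y \ (X ∪ S) = insert a (Q \ S) := by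
    intro S hS
    ext x
    simp only [hY, mem_sdiff, mem_union, mem_insert]
    constructor
    · rintro ⟨rfl | hx1 | hx1, hx2⟩
      · exact Or.inl rfl
      · exact absurd (Or.inl hx1) hx2
      · exact Or.inr ⟨hx1, fun h => hx2 (Or.inr h)⟩
    · rintro (rfl | ⟨hx1, hx2⟩)
      · refine ⟨Or.inl rfl, ?_⟩
        rintro (hx | hx)
        · exact haXX hx
        · rcases mem_union.1 (hS hx) with h | h
          · exact haP h
          · exact haQ h
      · refine ⟨Or.inr (Or.inr hx1), ?_⟩
        rintro (hx | hx)
        · exact hXQ x hx hx1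
        · exact hx2 hx
  have hPsub : P ⊆ P ∪ Q := subset_union_left
  have hPQdiff : P \ Q = P := sdiff_eq_self_of_disjoint (disjoint_left.2 hPQ)
  -- the positive part
  constructor
  · rintro S (⟨b, hbQ, rfl⟩ | ⟨c, hcP, b, hbQ, rfl⟩)
    · -- S = insert b P
      have hSsub : insert b P ⊆ P ∪ Q := by
        intro x hx
        rcases mem_insert.1 hx with rfl | hx
        · exact mem_union_right _ hbQ
        · exact mem_union_left _ hx
      have hD2 : (X ∪ insert b P) \ Y = P := by
        rw [hD2gen _ hSsub]
        ext x
        simp only [mem_sdiff, mem_insert]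
        constructor
        · rintro ⟨rfl | hx, hx2⟩
          · exact absurd hbQ hx2
          · exact hx
        · exact fun hx => ⟨Or.inr hx, hPQ x hx⟩
      have hD1 : Y \ (X ∪ insert b P) = insert a (Q.erase b) := by
        rw [hD1gen _ hSsub]
        congr 1
        ext x
        simp only [mem_sdiff, mem_insert, mem_erase]
        constructor
        · rintro ⟨hx, hx2⟩
          exact ⟨fun h => hx2 (Or.inl h), hx⟩
        · rintro ⟨hx1, hx2⟩
          refine ⟨hx2, ?_⟩
          rintro (rfl | h)
          · exact hx1 rfl
          · exact hPQ x h hx2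
      have hD1card : (insert a (Q.erase b)).card = r / 2 + 1 := by
        rw [card_insert_of_notMem (fun h => haQ (mem_of_mem_erase h)),
          card_erase_of_mem hbQ, hQcard]
        omega
      have hle : altLen Y (X ∪ insert b P) ≤ r + 2 := by
        have := altLen_le_card Y (X ∪ insert b P)
        rw [hD1, hD2, hD1card, hPcard] at this
        omega
      refine ⟨hle, fun heq => ?_⟩
      -- cards are equal
      have hdisjXS : Disjoint X (insert b P) := by
        rw [disjoint_left]
        intro x hx hx2
        rcases mem_insert.1 hx2 with rfl | h
        · exact hXQ x hx hbQ
        · exact hXP x hx h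
      have hScard : (X ∪ insert b P).card = X.card + (r / 2 + 1) + 1 := by
        rw [card_union_of_disjoint hdisjXS, card_insert_of_notMem (fun h => hPQ b h hbQ), hPcard]
        omega
      have hne1 : (Y \ (X ∪ insert b P)).Nonempty := ⟨a, by rw [hD1]; exact mem_insert_self _ _⟩
      have hne2 : ((X ∪ insert b P) \ Y).Nonempty := ⟨p 0, by rw [hD2, hP]; simp⟩
      have hdisj : Disjoint (Y \ (X ∪ insert b P)) ((X ∪ insert b P) \ Y) :=
        disjoint_sdiff_sdiff
      have hmaxne : (Y \ (X ∪ insert b P)).max' hne1 ≠ ((X ∪ insert b P) \ Y).max' hne2 := by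
        intro h
        exact disjoint_left.1 hdisj (max'_mem _ hne1) (h ▸ max'_mem _ hne2)
      rcases hmaxne.lt_or_gt with h | h
      · right
        constructor
        · unfold SurroundsRight
          rw [← coe_max' hne1, ← coe_max' hne2]
          exact_mod_cast h
        · rw [hYcard, hScard]
      · left
        constructor
        · unfold SurroundsRight
          rw [← coe_max' hne1, ← coe_max' hne2]
          exact_mod_cast h
        · rw [hYcard, hScard]
    · -- S = insert b (P.erase c)
      have hSsub : insert b (P.erase c) ⊆ P ∪ Q := by
        intro x hx
        rcases mem_insert.1 hx with rfl | hx
        · exact mem_union_right _ hbQ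
        · exact mem_union_left _ (mem_of_mem_erase hx)
      have hD2 : (X ∪ insert b (P.erase c)) \ Y = P.erase c := by
        rw [hD2gen _ hSsub]
        ext x
        simp only [mem_sdiff, mem_insert, mem_erase]
        constructor
        · rintro ⟨rfl | hx, hx2⟩
          · exact absurd hbQ hx2
          · exact hx
        · rintro ⟨hx1, hx2⟩
          exact ⟨Or.inr ⟨hx1, hx2⟩, hPQ x hx2⟩
      have hD1 : Y \ (X ∪ insert b (P.erase c)) = insert a (Q.erase b) := by
        rw [hD1gen _ hSsub]
        congr 1
        ext x
        simp only [mem_sdiff, mem_insert, mem_erase]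
        constructor
        · rintro ⟨hx, hx2⟩
          exact ⟨fun h => hx2 (Or.inl h), hx⟩
        · rintro ⟨hx1, hx2⟩
          refine ⟨hx2, ?_⟩
          rintro (rfl | ⟨h1, h2⟩)
          · exact hx1 rfl
          · exact hPQ x h2 hx2
      have hD1card : (insert a (Q.erase b)).card = r / 2 + 1 := by
        rw [card_insert_of_notMem (fun h => haQ (mem_of_mem_erase h)),
          card_erase_of_mem hbQ, hQcard]
        omega
      have hle : altLen Y (X ∪ insert b (P.erase c)) ≤ r + 1 := by
        have := altLen_le_card Y (X ∪ insert b (P.erase c))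
        rw [hD1, hD2, hD1card, card_erase_of_mem hcP, hPcard] at this
        omega
      exact ⟨by omega, fun heq => by omega⟩
  · -- negative part
    -- the alternating sequence of length r + 2
    have hidx : ∀ j : Fin (r + 2), (j : ℕ) / 2 < r / 2 + 1 := by
      intro j
      have := j.isLt
      omega
    set f : Fin (r + 2) → ℕ := fun j =>
      if (j : ℕ) % 2 = 0 then p ⟨(j : ℕ) / 2, hidx j⟩ else q ⟨(j : ℕ) / 2, hidx j⟩ with hf
    have hfm : StrictMono f := by
      intro i j hij
      have hij' : (i : ℕ) < (j : ℕ) := hij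
      simp only [hf]
      rcases Nat.mod_two_eq_zero_or_one (i : ℕ) with hi2 | hi2 <;>
        rcases Nat.mod_two_eq_zero_or_one (j : ℕ) with hj2 | hj2 <;>
        simp only [hi2, hj2] <;> norm_num
      · exact pm (by simp [Fin.lt_def]; omega)
      · exact hpq' _ _ (by simp [Fin.le_def]; omega)
      · exact hqp _ _ (by simp [Fin.lt_def]; omega)
      · exact qm (by simp [Fin.lt_def]; omega)
    have hD2P : (X ∪ P) \ Y = P := by
      rw [hD2gen _ hPsub, hPQdiff]
    have hD1P : Y \ (X ∪ P) = insert a Q := by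
      rw [hD1gen _ hPsub]
      congr 1
      exact sdiff_eq_self_of_disjoint (disjoint_right.2 hPQ)
    have halt : IsAltSeq Y (X ∪ P) f := by
      refine ⟨hfm, Or.inr ⟨fun j hj => ?_, fun j hj => ?_⟩⟩
      · rw [hD2P]
        simp only [hf, hj]
        norm_num
        rw [hP]
        simp
      · rw [hD1P]
        simp only [hf, hj]
        norm_num
        exact Or.inr (by rw [hQ]; simp)
    have hge : r + 2 ≤ altLen Y (X ∪ P) := le_altLen halt
    rintro ⟨h1, h2⟩
    have heq : altLen Y (X ∪ P) = r + 2 := le_antisymm h1 hge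
    have hXPcard : (X ∪ P).card = X.card + (r / 2 + 1) := by
      rw [card_union_of_disjoint (disjoint_left.2 hXP), hPcard]
    -- max of P side < max of Q side
    have hlast : ∀ x ∈ P, x ≤ p (Fin.last (r / 2)) := by
      intro x hx
      rw [hP] at hx
      simp only [mem_image, mem_univ, true_and] at hx
      obtain ⟨i, rfl⟩ := hx
      exact pm.monotone (Fin.le_last i)
    have hmaxlt : ((X ∪ P) \ Y).max < (Y \ (X ∪ P)).max := by
      rw [hD2P, hD1P]
      have h1' : P.max ≤ (p (Fin.last (r / 2)) : WithBot ℕ) :=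
        Finset.max_le (fun x hx => WithBot.coe_le_coe.2 (hlast x hx))
      have h2' : (q (Fin.last (r / 2)) : WithBot ℕ) ≤ (insert a Q).max := by
        apply Finset.le_max
        apply mem_insert_of_mem
        rw [hQ]; simp
      calc P.max ≤ (p (Fin.last (r / 2)) : WithBot ℕ) := h1'
        _ < (q (Fin.last (r / 2)) : WithBot ℕ) := WithBot.coe_lt_coe.2 (hpq _)
        _ ≤ (insert a Q).max := h2'
    rcases h2 heq with ⟨hsr, hcard⟩ | ⟨hsr, hcard⟩
    · rw [hYcard, hXPcard] at hcard
      omega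
    · exact absurd hsr (not_lt.2 hmaxlt.le)
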